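/- Let V ⊆ ℝ² be a bounded open set whose closure is contained in 𝔻, and let φ₁, φ₂ be real-valued functions that are continuous on the closure of V, twice differentiable on V, and satisfy Δφ + 8·φ/(1 + x² + y²)² = 0 at every point of V. If φ₁ = φ₂ at every point of the topological frontier of V, then φ₁ = φ₂ on the closure of V. -/

import Mathlib

open Filter Set Topology

/-- Partial derivative in `x` of a function of two real variables. -/
noncomputable def pdx (f : ℝ × ℝ → ℝ) (p : ℝ × ℝ) : ℝ := fderiv ℝ f p (1, 0)

/-- Partial derivative in `y` of a function of two real variables. -/
noncomputable def pdy (f : ℝ × ℝ → ℝ) (p : ℝ × ℝ) : ℝ := fderiv ℝ f p (0, 1)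

/-- Laplacian of a function of two real variables. -/
noncomputable def lap (f : ℝ × ℝ → ℝ) (p : ℝ × ℝ) : ℝ := pdx (pdx f) p + pdy (pdy f) p


/-- One-dimensional second derivative test (necessary condition at a local max). -/
lemma sdt {g h : ℝ → ℝ} {a δ m : ℝ} (hδ : 0 < δ)
    (hg : ∀ x ∈ Set.Ioo (a - δ) (a + δ), HasDerivAt g (h x) x)
    (hh : HasDerivAt h m a) (hmax : IsLocalMax g a) : m ≤ 0 := by
  by_contra hm
  push_neg at hm
  have ha : a ∈ Set.Ioo (a - δ) (a + δ) := by constructor <;> linarith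
  -- h a = 0
  have hda : deriv g a = h a := (hg a ha).deriv
  have h0 : h a = 0 := by rw [← hda]; exact hmax.deriv_eq_zero
  -- slope of h tends to m > 0
  have hslope : Tendsto (slope h a) (𝓝[≠] a) (𝓝 m) :=
    hasDerivAt_iff_tendsto_slope.1 hh
  have hev : ∀ᶠ x in 𝓝[≠] a, 0 < slope h a x :=
    hslope.eventually (eventually_gt_nhds hm)
  rw [eventually_nhdsWithin_iff] at hev
  rcases Metric.eventually_nhds_iff.1 hev with ⟨δ₁, hδ₁, hball⟩
  rcases Metric.eventually_nhds_iff.1 hmax with ⟨δ₂, hδ₂, hmaxball⟩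
  set r := min δ (min δ₁ δ₂) / 2 with hr
  have hr0 : 0 < r := by positivity
  have hpos : ∀ x ∈ Set.Ioo a (a + r), 0 < h x := by
    intro x hx
    have hxa : x ≠ a := ne_of_gt hx.1
    have hd : dist x a < δ₁ := by
      rw [Real.dist_eq, abs_of_pos (by linarith [hx.1])]
      have : r < δ₁ := by
        have := min_le_left δ₁ δ₂
        have := min_le_right δ (min δ₁ δ₂)
        simp only [hr]
        have h1 : min δ (min δ₁ δ₂) ≤ δ₁ := le_trans (min_le_right _ _) (min_le_left _ _)
        linarith
      linarith [hx.2]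
    have := hball hd hxa
    have hsl : slope h a x = h x / (x - a) := by
      rw [slope_def_field, h0]; ring_nf
    rw [hsl] at this
    have hxa' : 0 < x - a := by linarith [hx.1]
    have := mul_pos this hxa'
    rwa [div_mul_cancel₀] at this
    exact ne_of_gt hxa'
  -- g strictly mono on [a, a + r/1]
  have hrδ : a + r < a + δ := by
    have : r < δ := by
      have h1 : min δ (min δ₁ δ₂) ≤ δ := min_le_left _ _
      simp only [hr]; linarith
    linarith
  have hmono : StrictMonoOn g (Set.Icc a (a + r)) := by
    apply strictMonoOn_of_deriv_pos (convex_Icc _ _)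
    · intro x hx
      have : x ∈ Set.Ioo (a - δ) (a + δ) := ⟨by linarith [hx.1], by linarith [hx.2, hrδ]⟩
      exact (hg x this).continuousAt.continuousWithinAt
    · intro x hx
      rw [interior_Icc] at hx
      have hxI : x ∈ Set.Ioo (a - δ) (a + δ) := ⟨by linarith [hx.1], by linarith [hx.2, hrδ]⟩
      rw [(hg x hxI).deriv]
      exact hpos x ⟨hx.1, hx.2⟩
  have hlt : g a < g (a + r) := hmono (by constructor <;> [linarith; linarith])
    (by constructor <;> linarith) (by linarith)
  have hle : g (a + r) ≤ g a := by
    apply hmaxball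
    rw [Real.dist_eq]
    have : r < δ₂ := by
      have h1 : min δ (min δ₁ δ₂) ≤ δ₂ := le_trans (min_le_right _ _) (min_le_right _ _)
      simp only [hr]; linarith
    rw [abs_of_pos (by linarith)]
    simpa using this
  linarith

lemma pdx_of_hasFDerivAt {f : ℝ × ℝ → ℝ} {p : ℝ × ℝ} {L : ℝ × ℝ →L[ℝ] ℝ}
    (h : HasFDerivAt f L p) : pdx f p = L (1, 0) := by rw [pdx, h.fderiv]

lemma pdy_of_hasFDerivAt {f : ℝ × ℝ → ℝ} {p : ℝ × ℝ} {L : ℝ × ℝ →L[ℝ] ℝ}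
    (h : HasFDerivAt f L p) : pdy f p = L (0, 1) := by rw [pdy, h.fderiv]

lemma pdx_congr {f g : ℝ × ℝ → ℝ} {p : ℝ × ℝ} (h : f =ᶠ[𝓝 p] g) : pdx f p = pdx g p := by
  rw [pdx, pdx, h.fderiv_eq]

lemma pdy_congr {f g : ℝ × ℝ → ℝ} {p : ℝ × ℝ} (h : f =ᶠ[𝓝 p] g) : pdy f p = pdy g p := by
  rw [pdy, pdy, h.fderiv_eq]

lemma hasDerivAt_sliceX {F : ℝ × ℝ → ℝ} {x y : ℝ} (h : DifferentiableAt ℝ F (x, y)) :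
    HasDerivAt (fun t => F (t, y)) (pdx F (x, y)) x := by
  have hl : HasDerivAt (fun t : ℝ => (t, y)) ((1 : ℝ), (0 : ℝ)) x :=
    (hasDerivAt_id x).prodMk (hasDerivAt_const x y)
  exact h.hasFDerivAt.comp_hasDerivAt x hl

lemma hasDerivAt_sliceY {F : ℝ × ℝ → ℝ} {x y : ℝ} (h : DifferentiableAt ℝ F (x, y)) :
    HasDerivAt (fun t => F (x, t)) (pdy F (x, y)) y := by
  have hl : HasDerivAt (fun t : ℝ => (x, t)) ((0 : ℝ), (1 : ℝ)) y :=
    (hasDerivAt_const y x).prodMk (hasDerivAt_id y)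
  exact h.hasFDerivAt.comp_hasDerivAt y hl

-- explicit function w and its derivatives
noncomputable def wf : ℝ × ℝ → ℝ := fun p => (1 - (p.1 ^ 2 + p.2 ^ 2)) / (1 + (p.1 ^ 2 + p.2 ^ 2))
noncomputable def wfx : ℝ × ℝ → ℝ := fun p => -4 * p.1 / (1 + (p.1 ^ 2 + p.2 ^ 2)) ^ 2
noncomputable def wfy : ℝ × ℝ → ℝ := fun p => -4 * p.2 / (1 + (p.1 ^ 2 + p.2 ^ 2)) ^ 2

lemma n_pos (p : ℝ × ℝ) : (0:ℝ) < 1 + (p.1 ^ 2 + p.2 ^ 2) := by positivity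

lemma hasFDerivAt_n (p : ℝ × ℝ) :
    HasFDerivAt (fun q : ℝ × ℝ => q.1 ^ 2 + q.2 ^ 2)
      ((2 * p.1) • ContinuousLinearMap.fst ℝ ℝ ℝ + (2 * p.2) • ContinuousLinearMap.snd ℝ ℝ ℝ) p := by
  have h1 : HasFDerivAt (fun q : ℝ × ℝ => q.1 ^ 2)
      ((2 * p.1) • ContinuousLinearMap.fst ℝ ℝ ℝ) p := by
    have h := (hasFDerivAt_fst (𝕜 := ℝ) (p := p) (F := ℝ)).fun_mul (hasFDerivAt_fst (𝕜 := ℝ) (p := p) (F := ℝ))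
    simpa [pow_two, two_mul, add_smul] using h
  have h2 : HasFDerivAt (fun q : ℝ × ℝ => q.2 ^ 2)
      ((2 * p.2) • ContinuousLinearMap.snd ℝ ℝ ℝ) p := by
    have h := (hasFDerivAt_snd (𝕜 := ℝ) (p := p) (E := ℝ)).fun_mul (hasFDerivAt_snd (𝕜 := ℝ) (p := p) (E := ℝ))
    simpa [pow_two, two_mul, add_smul] using h
  exact h1.add h2

lemma hasFDerivAt_wf (p : ℝ × ℝ) :
    HasFDerivAt wf ((-2 / (1 + (p.1 ^ 2 + p.2 ^ 2)) ^ 2) •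
      ((2 * p.1) • ContinuousLinearMap.fst ℝ ℝ ℝ + (2 * p.2) • ContinuousLinearMap.snd ℝ ℝ ℝ)) p := by
  set n := p.1 ^ 2 + p.2 ^ 2 with hn
  have hden : (1 : ℝ) + n ≠ 0 := ne_of_gt (n_pos p)
  have houter : HasDerivAt (fun t : ℝ => (1 - t) / (1 + t)) (-2 / (1 + n) ^ 2) n := by
    have h1 : HasDerivAt (fun t : ℝ => 1 - t) (-1) n := by
      simpa using ((hasDerivAt_id n).const_sub 1)
    have h2 : HasDerivAt (fun t : ℝ => 1 + t) 1 n := by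
      simpa using ((hasDerivAt_id n).const_add 1)
    have := h1.fun_div h2 hden
    refine this.congr_deriv (Eq.symm ?_)
    field_simp
    ring
  exact houter.comp_hasFDerivAt p (hasFDerivAt_n p)

lemma pdx_wf (p : ℝ × ℝ) : pdx wf p = wfx p := by
  rw [pdx_of_hasFDerivAt (hasFDerivAt_wf p)]
  simp [wfx]
  ring

lemma pdy_wf (p : ℝ × ℝ) : pdy wf p = wfy p := by
  rw [pdy_of_hasFDerivAt (hasFDerivAt_wf p)]
  simp [wfy]
  ring

lemma hasFDerivAt_inv_comp {g : ℝ × ℝ → ℝ} {G : ℝ × ℝ →L[ℝ] ℝ} {p : ℝ × ℝ}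
    (hg : HasFDerivAt g G p) (h0 : g p ≠ 0) :
    HasFDerivAt (fun q => (g q)⁻¹) ((-(g p ^ 2)⁻¹) • G) p := by
  have h := (hasDerivAt_inv h0).comp_hasFDerivAt p hg
  exact h.congr_fderiv (by module)

lemma hasFDerivAt_div' {u w : ℝ × ℝ → ℝ} {U W : ℝ × ℝ →L[ℝ] ℝ} {p : ℝ × ℝ}
    (hu : HasFDerivAt u U p) (hw : HasFDerivAt w W p) (h0 : w p ≠ 0) :
    HasFDerivAt (fun q => u q / w q) (u p • ((-(w p ^ 2)⁻¹) • W) + (w p)⁻¹ • U) p := by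
  simp only [div_eq_mul_inv]
  exact hu.mul (hasFDerivAt_inv_comp hw h0)

lemma hasFDerivAt_den (p : ℝ × ℝ) :
    HasFDerivAt (fun q : ℝ × ℝ => (1 + (q.1 ^ 2 + q.2 ^ 2)) ^ 2)
      ((2 * (1 + (p.1 ^ 2 + p.2 ^ 2))) •
        ((2 * p.1) • ContinuousLinearMap.fst ℝ ℝ ℝ + (2 * p.2) • ContinuousLinearMap.snd ℝ ℝ ℝ)) p := by
  have hb : HasFDerivAt (fun q : ℝ × ℝ => 1 + (q.1 ^ 2 + q.2 ^ 2))
      ((2 * p.1) • ContinuousLinearMap.fst ℝ ℝ ℝ + (2 * p.2) • ContinuousLinearMap.snd ℝ ℝ ℝ) p :=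
    (hasFDerivAt_n p).const_add 1
  have h := hb.fun_mul hb
  have : HasFDerivAt (fun q : ℝ × ℝ => (1 + (q.1 ^ 2 + q.2 ^ 2)) * (1 + (q.1 ^ 2 + q.2 ^ 2)))
      ((2 * (1 + (p.1 ^ 2 + p.2 ^ 2))) •
        ((2 * p.1) • ContinuousLinearMap.fst ℝ ℝ ℝ + (2 * p.2) • ContinuousLinearMap.snd ℝ ℝ ℝ)) p := by
    refine h.congr_fderiv (Eq.symm ?_)
    rw [two_mul, add_smul]
  simpa [pow_two] using this

lemma hasFDerivAt_wfx (p : ℝ × ℝ) :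
    HasFDerivAt wfx
      ((-4 * p.1) • ((-(((1 + (p.1 ^ 2 + p.2 ^ 2)) ^ 2) ^ 2)⁻¹) •
          ((2 * (1 + (p.1 ^ 2 + p.2 ^ 2))) •
            ((2 * p.1) • ContinuousLinearMap.fst ℝ ℝ ℝ + (2 * p.2) • ContinuousLinearMap.snd ℝ ℝ ℝ)))
        + ((1 + (p.1 ^ 2 + p.2 ^ 2)) ^ 2)⁻¹ • ((-4 : ℝ) • ContinuousLinearMap.fst ℝ ℝ ℝ)) p := by
  have hnum : HasFDerivAt (fun q : ℝ × ℝ => -4 * q.1)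
      ((-4 : ℝ) • ContinuousLinearMap.fst ℝ ℝ ℝ) p := by
    have h := (hasFDerivAt_fst (𝕜 := ℝ) (p := p) (F := ℝ)).const_smul (-4 : ℝ)
    exact (h.congr_of_eventuallyEq (by filter_upwards with q; simp)).congr_fderiv rfl
  have h0 : ((1 : ℝ) + (p.1 ^ 2 + p.2 ^ 2)) ^ 2 ≠ 0 := by positivity
  exact hasFDerivAt_div' hnum (hasFDerivAt_den p) h0

lemma hasFDerivAt_wfy (p : ℝ × ℝ) :
    HasFDerivAt wfy
      ((-4 * p.2) • ((-(((1 + (p.1 ^ 2 + p.2 ^ 2)) ^ 2) ^ 2)⁻¹) •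
          ((2 * (1 + (p.1 ^ 2 + p.2 ^ 2))) •
            ((2 * p.1) • ContinuousLinearMap.fst ℝ ℝ ℝ + (2 * p.2) • ContinuousLinearMap.snd ℝ ℝ ℝ)))
        + ((1 + (p.1 ^ 2 + p.2 ^ 2)) ^ 2)⁻¹ • ((-4 : ℝ) • ContinuousLinearMap.snd ℝ ℝ ℝ)) p := by
  have hnum : HasFDerivAt (fun q : ℝ × ℝ => -4 * q.2)
      ((-4 : ℝ) • ContinuousLinearMap.snd ℝ ℝ ℝ) p := by
    have h := (hasFDerivAt_snd (𝕜 := ℝ) (p := p) (E := ℝ)).const_smul (-4 : ℝ)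
    exact (h.congr_of_eventuallyEq (by filter_upwards with q; simp)).congr_fderiv rfl
  have h0 : ((1 : ℝ) + (p.1 ^ 2 + p.2 ^ 2)) ^ 2 ≠ 0 := by positivity
  exact hasFDerivAt_div' hnum (hasFDerivAt_den p) h0

lemma lap_wf (p : ℝ × ℝ) :
    lap wf p + 8 * wf p / (1 + p.1 ^ 2 + p.2 ^ 2) ^ 2 = 0 := by
  have hx : pdx wf = wfx := funext pdx_wf
  have hy : pdy wf = wfy := funext pdy_wf
  have h1 : pdx (pdx wf) p = pdx wfx p := by rw [hx]
  have h2 : pdy (pdy wf) p = pdy wfy p := by rw [hy]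
  rw [lap, h1, h2, pdx_of_hasFDerivAt (hasFDerivAt_wfx p), pdy_of_hasFDerivAt (hasFDerivAt_wfy p)]
  have h0 : (0:ℝ) < 1 + (p.1 ^ 2 + p.2 ^ 2) := n_pos p
  simp only [ContinuousLinearMap.add_apply, ContinuousLinearMap.smul_apply,
    ContinuousLinearMap.coe_fst', ContinuousLinearMap.coe_snd', smul_eq_mul, wf]
  field_simp
  ring

lemma div_hasFDerivAt {u w : ℝ × ℝ → ℝ} {p : ℝ × ℝ}
    (hu : DifferentiableAt ℝ u p) (hw : DifferentiableAt ℝ w p) (h0 : w p ≠ 0) :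
    HasFDerivAt (fun q => u q / w q)
      (u p • ((-(w p ^ 2)⁻¹) • fderiv ℝ w p) + (w p)⁻¹ • fderiv ℝ u p) p :=
  hasFDerivAt_div' hu.hasFDerivAt hw.hasFDerivAt h0

lemma div_pdx {u w : ℝ × ℝ → ℝ} {p : ℝ × ℝ}
    (hu : DifferentiableAt ℝ u p) (hw : DifferentiableAt ℝ w p) (h0 : w p ≠ 0) :
    pdx (fun q => u q / w q) p = (pdx u p * w p - u p * pdx w p) / (w p * w p) := by
  rw [pdx_of_hasFDerivAt (div_hasFDerivAt hu hw h0)]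
  simp only [ContinuousLinearMap.add_apply, ContinuousLinearMap.smul_apply, smul_eq_mul]
  have : pdx u p = fderiv ℝ u p (1,0) := rfl
  rw [← this]
  have : pdx w p = fderiv ℝ w p (1,0) := rfl
  rw [← this]
  field_simp
  ring

lemma div_pdy {u w : ℝ × ℝ → ℝ} {p : ℝ × ℝ}
    (hu : DifferentiableAt ℝ u p) (hw : DifferentiableAt ℝ w p) (h0 : w p ≠ 0) :
    pdy (fun q => u q / w q) p = (pdy u p * w p - u p * pdy w p) / (w p * w p) := by
  rw [pdy_of_hasFDerivAt (div_hasFDerivAt hu hw h0)]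
  simp only [ContinuousLinearMap.add_apply, ContinuousLinearMap.smul_apply, smul_eq_mul]
  have : pdy u p = fderiv ℝ u p (0,1) := rfl
  rw [← this]
  have : pdy w p = fderiv ℝ w p (0,1) := rfl
  rw [← this]
  field_simp
  ring

/-- Core identity: `v = u/w` satisfies `w Δv + 2 ∇w·∇v = 0` when `w Δu = u Δw`. -/
lemma key (S : Set (ℝ × ℝ)) (hS : IsOpen S) (u w : ℝ × ℝ → ℝ)
    (hu : ∀ p ∈ S, DifferentiableAt ℝ u p ∧ DifferentiableAt ℝ (pdx u) p ∧
      DifferentiableAt ℝ (pdy u) p)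
    (hw : ∀ p ∈ S, DifferentiableAt ℝ w p ∧ DifferentiableAt ℝ (pdx w) p ∧
      DifferentiableAt ℝ (pdy w) p)
    (hw0 : ∀ p ∈ S, w p ≠ 0)
    (hrel : ∀ p ∈ S, w p * lap u p = u p * lap w p) :
    ∀ p ∈ S,
      w p * lap (fun q => u q / w q) p +
        2 * (pdx w p * pdx (fun q => u q / w q) p + pdy w p * pdy (fun q => u q / w q) p) = 0 := by
  intro p hp
  set v : ℝ × ℝ → ℝ := fun q => u q / w q with hv
  set vx : ℝ × ℝ → ℝ := fun q => (pdx u q * w q - u q * pdx w q) / (w q * w q) with hvx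
  set vy : ℝ × ℝ → ℝ := fun q => (pdy u q * w q - u q * pdy w q) / (w q * w q) with hvy
  have hSmem : S ∈ 𝓝 p := hS.mem_nhds hp
  -- pdx v = vx on S
  have hxev : pdx v =ᶠ[𝓝 p] vx := by
    filter_upwards [hSmem] with q hq
    exact div_pdx (hu q hq).1 (hw q hq).1 (hw0 q hq)
  have hyev : pdy v =ᶠ[𝓝 p] vy := by
    filter_upwards [hSmem] with q hq
    exact div_pdy (hu q hq).1 (hw q hq).1 (hw0 q hq)
  have hb : w p ≠ 0 := hw0 p hp
  have hD : w p * w p ≠ 0 := mul_ne_zero hb hb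
  -- second derivatives
  obtain ⟨hup, huxp, huyp⟩ := hu p hp
  obtain ⟨hwp, hwxp, hwyp⟩ := hw p hp
  have hNx : HasFDerivAt (fun q => pdx u q * w q - u q * pdx w q)
      ((pdx u p • fderiv ℝ w p + w p • fderiv ℝ (pdx u) p) -
       (u p • fderiv ℝ (pdx w) p + pdx w p • fderiv ℝ u p)) p :=
    (huxp.hasFDerivAt.mul hwp.hasFDerivAt).sub (hup.hasFDerivAt.mul hwxp.hasFDerivAt)
  have hNy : HasFDerivAt (fun q => pdy u q * w q - u q * pdy w q)
      ((pdy u p • fderiv ℝ w p + w p • fderiv ℝ (pdy u) p) -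
       (u p • fderiv ℝ (pdy w) p + pdy w p • fderiv ℝ u p)) p :=
    (huyp.hasFDerivAt.mul hwp.hasFDerivAt).sub (hup.hasFDerivAt.mul hwyp.hasFDerivAt)
  have hDD : HasFDerivAt (fun q => w q * w q)
      (w p • fderiv ℝ w p + w p • fderiv ℝ w p) p :=
    hwp.hasFDerivAt.mul hwp.hasFDerivAt
  have hxx : pdx (pdx v) p = pdx vx p := pdx_congr hxev
  have hyy : pdy (pdy v) p = pdy vy p := pdy_congr hyev
  have hvxval : pdx vx p = _ := pdx_of_hasFDerivAt (hasFDerivAt_div' hNx hDD hD)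
  have hvyval : pdy vy p = _ := pdy_of_hasFDerivAt (hasFDerivAt_div' hNy hDD hD)
  have e1 : (fderiv ℝ u p) (1,0) = pdx u p := rfl
  have e2 : (fderiv ℝ u p) (0,1) = pdy u p := rfl
  have e3 : (fderiv ℝ w p) (1,0) = pdx w p := rfl
  have e4 : (fderiv ℝ w p) (0,1) = pdy w p := rfl
  have e5 : (fderiv ℝ (pdx u) p) (1,0) = pdx (pdx u) p := rfl
  have e6 : (fderiv ℝ (pdy u) p) (0,1) = pdy (pdy u) p := rfl
  have e7 : (fderiv ℝ (pdx w) p) (1,0) = pdx (pdx w) p := rfl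
  have e8 : (fderiv ℝ (pdy w) p) (0,1) = pdy (pdy w) p := rfl
  have hrelp := hrel p hp
  simp only [lap] at hrelp ⊢
  rw [hxx, hyy, hvxval, hvyval, hxev.self_of_nhds, hyev.self_of_nhds]
  simp only [ContinuousLinearMap.add_apply, ContinuousLinearMap.sub_apply,
    ContinuousLinearMap.smul_apply, smul_eq_mul, e1, e2, e3, e4, e5, e6, e7, e8, hvx, hvy]
  set a := u p
  set b := w p
  set ax := pdx u p
  set ay := pdy u p
  set bx := pdx w p
  set by' := pdy w p
  set axx := pdx (pdx u) p
  set ayy := pdy (pdy u) p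
  set bxx := pdx (pdx w) p
  set byy := pdy (pdy w) p
  field_simp
  linear_combination b * hrelp

noncomputable def ef (α : ℝ) : ℝ × ℝ → ℝ := fun p => Real.exp (α * p.1)

lemma ef_pos (α : ℝ) (p : ℝ × ℝ) : 0 < ef α p := Real.exp_pos _

lemma hasFDerivAt_ef (α : ℝ) (p : ℝ × ℝ) :
    HasFDerivAt (ef α) ((α * Real.exp (α * p.1)) • ContinuousLinearMap.fst ℝ ℝ ℝ) p := by
  have hi : HasFDerivAt (fun q : ℝ × ℝ => α * q.1) (α • ContinuousLinearMap.fst ℝ ℝ ℝ) p :=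
    (hasFDerivAt_fst (𝕜 := ℝ) (p := p) (F := ℝ)).const_smul α
  have h := (Real.hasDerivAt_exp (α * p.1)).comp_hasFDerivAt p hi
  exact h.congr_fderiv (by module)

lemma pdx_ef (α : ℝ) (p : ℝ × ℝ) : pdx (ef α) p = α * ef α p := by
  rw [pdx_of_hasFDerivAt (hasFDerivAt_ef α p)]; simp [ef]

lemma pdy_ef (α : ℝ) (p : ℝ × ℝ) : pdy (ef α) p = 0 := by
  rw [pdy_of_hasFDerivAt (hasFDerivAt_ef α p)]; simp

lemma pdx_pdx_ef (α : ℝ) (p : ℝ × ℝ) : pdx (pdx (ef α)) p = α ^ 2 * ef α p := by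
  have h : pdx (ef α) = fun q => α * ef α q := funext (pdx_ef α)
  rw [h]
  have h2 : HasFDerivAt (fun q => α * ef α q)
      (α • ((α * Real.exp (α * p.1)) • ContinuousLinearMap.fst ℝ ℝ ℝ)) p :=
    (hasFDerivAt_ef α p).const_smul α
  rw [pdx_of_hasFDerivAt h2]; simp [ef]; ring

lemma pdy_pdy_ef (α : ℝ) (p : ℝ × ℝ) : pdy (pdy (ef α)) p = 0 := by
  have h : pdy (ef α) = fun _ => (0 : ℝ) := funext (pdy_ef α)
  rw [h, pdy, fderiv_fun_const]; simp

lemma diff_ef (α : ℝ) (p : ℝ × ℝ) : DifferentiableAt ℝ (ef α) p :=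
  (hasFDerivAt_ef α p).differentiableAt

lemma diff_pdx_ef (α : ℝ) (p : ℝ × ℝ) : DifferentiableAt ℝ (pdx (ef α)) p := by
  have h : pdx (ef α) = fun q => α * ef α q := funext (pdx_ef α)
  rw [h]; exact (diff_ef α p).const_mul α

lemma diff_pdy_ef (α : ℝ) (p : ℝ × ℝ) : DifferentiableAt ℝ (pdy (ef α)) p := by
  have h : pdy (ef α) = fun _ => (0 : ℝ) := funext (pdy_ef α)
  rw [h]; exact differentiableAt_const 0

lemma pdx_add {f g : ℝ × ℝ → ℝ} {p : ℝ × ℝ} (hf : DifferentiableAt ℝ f p)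
    (hg : DifferentiableAt ℝ g p) : pdx (fun q => f q + g q) p = pdx f p + pdx g p := by
  simp [pdx, fderiv_fun_add hf hg]

lemma pdy_add {f g : ℝ × ℝ → ℝ} {p : ℝ × ℝ} (hf : DifferentiableAt ℝ f p)
    (hg : DifferentiableAt ℝ g p) : pdy (fun q => f q + g q) p = pdy f p + pdy g p := by
  simp [pdy, fderiv_fun_add hf hg]

lemma pdx_sub {f g : ℝ × ℝ → ℝ} {p : ℝ × ℝ} (hf : DifferentiableAt ℝ f p)
    (hg : DifferentiableAt ℝ g p) : pdx (fun q => f q - g q) p = pdx f p - pdx g p := by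
  simp [pdx, fderiv_fun_sub hf hg]

lemma pdy_sub {f g : ℝ × ℝ → ℝ} {p : ℝ × ℝ} (hf : DifferentiableAt ℝ f p)
    (hg : DifferentiableAt ℝ g p) : pdy (fun q => f q - g q) p = pdy f p - pdy g p := by
  simp [pdy, fderiv_fun_sub hf hg]

lemma pdx_const_mul {f : ℝ × ℝ → ℝ} {p : ℝ × ℝ} (c : ℝ) (hf : DifferentiableAt ℝ f p) :
    pdx (fun q => c * f q) p = c * pdx f p := by
  simp [pdx, fderiv_const_mul hf c]

lemma pdy_const_mul {f : ℝ × ℝ → ℝ} {p : ℝ × ℝ} (c : ℝ) (hf : DifferentiableAt ℝ f p) :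
    pdy (fun q => c * f q) p = c * pdy f p := by
  simp [pdy, fderiv_const_mul hf c]

lemma isLocalMax_sliceX {F : ℝ × ℝ → ℝ} {p : ℝ × ℝ} (h : IsLocalMax F p) :
    IsLocalMax (fun x => F (x, p.2)) p.1 := by
  have ht : Filter.Tendsto (fun x : ℝ => (x, p.2)) (𝓝 p.1) (𝓝 p) := by
    rw [show p = (p.1, p.2) from rfl]
    exact (Continuous.prodMk_left p.2).tendsto p.1
  exact ht.eventually h

lemma isLocalMax_sliceY {F : ℝ × ℝ → ℝ} {p : ℝ × ℝ} (h : IsLocalMax F p) :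
    IsLocalMax (fun y => F (p.1, y)) p.2 := by
  have ht : Filter.Tendsto (fun y : ℝ => (p.1, y)) (𝓝 p.2) (𝓝 p) := by
    rw [show p = (p.1, p.2) from rfl]
    exact (Continuous.prodMk_right p.1).tendsto p.2
  exact ht.eventually h

lemma wf_cont : Continuous wf :=
  Continuous.div (by continuity) (by continuity) (fun p => ne_of_gt (n_pos p))

lemma wfx_cont : Continuous wfx :=
  Continuous.div (by continuity) (by continuity) (fun p => by positivity)

lemma wf_pos {p : ℝ × ℝ} (h : p.1 ^ 2 + p.2 ^ 2 < 1) : 0 < wf p := by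
  have h1 : (0:ℝ) < 1 - (p.1 ^ 2 + p.2 ^ 2) := by linarith
  exact div_pos h1 (n_pos p)

set_option maxHeartbeats 1000000 in
lemma one_sided (V : Set (ℝ × ℝ)) (hVo : IsOpen V) (hVb : Bornology.IsBounded V)
    (hVD : closure V ⊆ {p : ℝ × ℝ | p.1 ^ 2 + p.2 ^ 2 < 1})
    (φ₁ φ₂ : ℝ × ℝ → ℝ)
    (hc1 : ContinuousOn φ₁ (closure V)) (hc2 : ContinuousOn φ₂ (closure V))
    (hd1 : ∀ p ∈ V, DifferentiableAt ℝ φ₁ p ∧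
      DifferentiableAt ℝ (pdx φ₁) p ∧ DifferentiableAt ℝ (pdy φ₁) p)
    (hd2 : ∀ p ∈ V, DifferentiableAt ℝ φ₂ p ∧
      DifferentiableAt ℝ (pdx φ₂) p ∧ DifferentiableAt ℝ (pdy φ₂) p)
    (hpde1 : ∀ p ∈ V, lap φ₁ p + 8 * φ₁ p / (1 + p.1 ^ 2 + p.2 ^ 2) ^ 2 = 0)
    (hpde2 : ∀ p ∈ V, lap φ₂ p + 8 * φ₂ p / (1 + p.1 ^ 2 + p.2 ^ 2) ^ 2 = 0)
    (hbd : ∀ p ∈ frontier V, φ₁ p = φ₂ p) :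
    ∀ p ∈ closure V, φ₁ p ≤ φ₂ p := by
  by_contra hcon
  push_neg at hcon
  obtain ⟨q, hqK, hq⟩ := hcon
  set u : ℝ × ℝ → ℝ := fun r => φ₁ r - φ₂ r with hu_def
  -- basic facts
  have hK : IsCompact (closure V) := hVb.isCompact_closure
  have hKne : (closure V).Nonempty := ⟨q, hqK⟩
  have hwpos : ∀ p ∈ closure V, 0 < wf p := fun p hp => wf_pos (hVD hp)
  have hVK : V ⊆ closure V := subset_closure
  -- u package on V
  have hud : ∀ p ∈ V, DifferentiableAt ℝ u p := fun p hp => (hd1 p hp).1.sub (hd2 p hp).1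
  have huxev : ∀ p ∈ V, pdx u =ᶠ[𝓝 p] fun r => pdx φ₁ r - pdx φ₂ r := by
    intro p hp
    filter_upwards [hVo.mem_nhds hp] with r hr
    exact pdx_sub (hd1 r hr).1 (hd2 r hr).1
  have huyev : ∀ p ∈ V, pdy u =ᶠ[𝓝 p] fun r => pdy φ₁ r - pdy φ₂ r := by
    intro p hp
    filter_upwards [hVo.mem_nhds hp] with r hr
    exact pdy_sub (hd1 r hr).1 (hd2 r hr).1
  have hux : ∀ p ∈ V, DifferentiableAt ℝ (pdx u) p := fun p hp =>
    ((huxev p hp).differentiableAt_iff).2 ((hd1 p hp).2.1.sub (hd2 p hp).2.1)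
  have huy : ∀ p ∈ V, DifferentiableAt ℝ (pdy u) p := fun p hp =>
    ((huyev p hp).differentiableAt_iff).2 ((hd1 p hp).2.2.sub (hd2 p hp).2.2)
  have hu_pkg : ∀ p ∈ V, DifferentiableAt ℝ u p ∧ DifferentiableAt ℝ (pdx u) p ∧
      DifferentiableAt ℝ (pdy u) p := fun p hp => ⟨hud p hp, hux p hp, huy p hp⟩
  have hlapu : ∀ p ∈ V, lap u p = lap φ₁ p - lap φ₂ p := by
    intro p hp
    have h1 : pdx (pdx u) p = pdx (fun r => pdx φ₁ r - pdx φ₂ r) p := pdx_congr (huxev p hp)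
    have h2 : pdy (pdy u) p = pdy (fun r => pdy φ₁ r - pdy φ₂ r) p := pdy_congr (huyev p hp)
    rw [lap, lap, lap, h1, h2, pdx_sub (hd1 p hp).2.1 (hd2 p hp).2.1,
      pdy_sub (hd1 p hp).2.2 (hd2 p hp).2.2]
    ring
  -- w package on V
  have hw_pkg : ∀ p ∈ V, DifferentiableAt ℝ wf p ∧ DifferentiableAt ℝ (pdx wf) p ∧
      DifferentiableAt ℝ (pdy wf) p := by
    intro p _
    refine ⟨(hasFDerivAt_wf p).differentiableAt, ?_, ?_⟩
    · rw [funext pdx_wf]; exact (hasFDerivAt_wfx p).differentiableAt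
    · rw [funext pdy_wf]; exact (hasFDerivAt_wfy p).differentiableAt
  have hw0 : ∀ p ∈ V, wf p ≠ 0 := fun p hp => ne_of_gt (hwpos p (hVK hp))
  have hrel : ∀ p ∈ V, wf p * lap u p = u p * lap wf p := by
    intro p hp
    have hD : ((1 : ℝ) + p.1 ^ 2 + p.2 ^ 2) ^ 2 ≠ 0 := by positivity
    have h1 := hpde1 p hp
    have h2 := hpde2 p hp
    have h3 := lap_wf p
    have hu' : lap u p = lap φ₁ p - lap φ₂ p := hlapu p hp
    have e1 : lap φ₁ p = -(8 * φ₁ p / (1 + p.1 ^ 2 + p.2 ^ 2) ^ 2) := by linarith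
    have e2 : lap φ₂ p = -(8 * φ₂ p / (1 + p.1 ^ 2 + p.2 ^ 2) ^ 2) := by linarith
    have e3 : lap wf p = -(8 * wf p / (1 + p.1 ^ 2 + p.2 ^ 2) ^ 2) := by linarith
    rw [hu', e1, e2, e3, hu_def]
    field_simp
    ring
  -- the quotient function
  set v : ℝ × ℝ → ℝ := fun q => u q / wf q with hv_def
  have hkey := key V hVo u wf hu_pkg hw_pkg hw0 hrel
  -- constants
  obtain ⟨z, hzK, hzmax'⟩ := hK.exists_isMaxOn hKne
    ((wfx_cont.continuousOn.div wf_cont.continuousOn (fun p hp => ne_of_gt (hwpos p hp))).abs)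
  have hzmax : ∀ p ∈ closure V, |wfx p / wf p| ≤ |wfx z / wf z| := fun p hp => hzmax' hp
  set C : ℝ := |wfx z / wf z| with hC_def
  have hC0 : 0 ≤ C := abs_nonneg _
  set α : ℝ := 2 * C + 1 with hα_def
  have hα : 0 < α := by positivity
  have hCb : ∀ p ∈ closure V, |pdx wf p| ≤ C * wf p := by
    intro p hp
    have h := hzmax p hp
    have hw := hwpos p hp
    rw [pdx_wf]
    calc |wfx p| = |wfx p / wf p| * wf p := by
          rw [abs_div, abs_of_pos hw]; field_simp
      _ ≤ C * wf p := by exact mul_le_mul_of_nonneg_right h hw.le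
  -- bound for ef
  obtain ⟨zb, hzbK, hzbmax'⟩ := hK.exists_isMaxOn hKne
    ((Real.continuous_exp.comp (continuous_const.mul continuous_fst)).continuousOn :
      ContinuousOn (ef α) (closure V))
  have hzbmax : ∀ p ∈ closure V, ef α p ≤ ef α zb := fun p hp => hzbmax' hp
  set B : ℝ := ef α zb with hB_def
  have hB : 0 < B := ef_pos α zb
  have hvq : 0 < v q := div_pos (by simpa [hu_def] using sub_pos.2 hq) (hwpos q hqK)
  set ε : ℝ := v q / (2 * B) with hε_def
  have hε : 0 < ε := div_pos hvq (by linarith)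
  set G : ℝ × ℝ → ℝ := fun r => v r + ε * ef α r with hG_def
  -- continuity of G on closure V
  have hu_cont : ContinuousOn u (closure V) := hc1.sub hc2
  have hv_cont : ContinuousOn v (closure V) :=
    hu_cont.div wf_cont.continuousOn (fun p hp => ne_of_gt (hwpos p hp))
  have hG_cont : ContinuousOn G (closure V) := by
    apply hv_cont.add
    exact (continuous_const.mul
      (Real.continuous_exp.comp (continuous_const.mul continuous_fst))).continuousOn
  -- maximum point
  obtain ⟨p₀, hp₀K, hp₀max'⟩ := hK.exists_isMaxOn hKne hG_cont
  have hp₀max : ∀ r ∈ closure V, G r ≤ G p₀ := fun r hr => hp₀max' hr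
  -- on the frontier G ≤ ε * B
  have hGfr : ∀ r ∈ frontier V, G r ≤ ε * B := by
    intro r hr
    have hrK : r ∈ closure V := frontier_subset_closure hr
    have hur : u r = 0 := by simp [hu_def, hbd r hr]
    have : v r = 0 := by simp [hv_def, hur]
    rw [hG_def]
    simp only [this, zero_add]
    exact mul_le_mul_of_nonneg_left (hzbmax r hrK) hε.le
  have hGq : ε * B < G q := by
    have h1 : v q = 2 * ε * B := by
      rw [hε_def]; field_simp
    have h2 : 0 < ε * ef α q := mul_pos hε (ef_pos α q)
    rw [hG_def]
    simp only
    nlinarith [mul_pos hε hB]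
  have hp₀V : p₀ ∈ V := by
    by_contra hcontr
    have hfr : p₀ ∈ frontier V := by
      rw [hVo.frontier_eq]; exact ⟨hp₀K, hcontr⟩
    have := hGfr p₀ hfr
    have := hp₀max q hqK
    linarith
  have hmax : IsLocalMax G p₀ := by
    filter_upwards [hVo.mem_nhds hp₀V] with r hr
    exact hp₀max r (hVK hr)
  -- differentiability of G and its partials
  have hvdiff : ∀ p ∈ V, DifferentiableAt ℝ v p := fun p hp =>
    (div_hasFDerivAt (hud p hp) (hw_pkg p hp).1 (hw0 p hp)).differentiableAt
  have hGdiff : ∀ p ∈ V, DifferentiableAt ℝ G p := fun p hp =>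
    (hvdiff p hp).add ((diff_ef α p).const_mul ε)
  -- pdx G  agrees with nice formula near p₀
  have hGxev : pdx G =ᶠ[𝓝 p₀] fun r => pdx v r + ε * (α * ef α r) := by
    filter_upwards [hVo.mem_nhds hp₀V] with r hr
    rw [hG_def]
    rw [pdx_add (hvdiff r hr) ((diff_ef α r).const_mul ε), pdx_const_mul ε (diff_ef α r),
      pdx_ef]
  have hGyev : pdy G =ᶠ[𝓝 p₀] fun r => pdy v r := by
    filter_upwards [hVo.mem_nhds hp₀V] with r hr
    rw [hG_def]
    rw [pdy_add (hvdiff r hr) ((diff_ef α r).const_mul ε), pdy_const_mul ε (diff_ef α r),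
      pdy_ef]
    ring
  -- pdx v agrees with quotient formula near p₀ (indeed on V)
  have hvxev : pdx v =ᶠ[𝓝 p₀] fun r => (pdx u r * wf r - u r * pdx wf r) / (wf r * wf r) := by
    filter_upwards [hVo.mem_nhds hp₀V] with r hr
    exact div_pdx (hud r hr) (hw_pkg r hr).1 (hw0 r hr)
  have hvyev : pdy v =ᶠ[𝓝 p₀] fun r => (pdy u r * wf r - u r * pdy wf r) / (wf r * wf r) := by
    filter_upwards [hVo.mem_nhds hp₀V] with r hr
    exact div_pdy (hud r hr) (hw_pkg r hr).1 (hw0 r hr)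
  have hDni : wf p₀ * wf p₀ ≠ 0 := mul_ne_zero (hw0 p₀ hp₀V) (hw0 p₀ hp₀V)
  have hvxdiff : DifferentiableAt ℝ (pdx v) p₀ := by
    rw [hvxev.differentiableAt_iff]
    exact (hasFDerivAt_div'
      (((hux p₀ hp₀V).hasFDerivAt.mul (hw_pkg p₀ hp₀V).1.hasFDerivAt).sub
        ((hud p₀ hp₀V).hasFDerivAt.mul (hw_pkg p₀ hp₀V).2.1.hasFDerivAt))
      ((hw_pkg p₀ hp₀V).1.hasFDerivAt.mul (hw_pkg p₀ hp₀V).1.hasFDerivAt) hDni).differentiableAt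
  have hvydiff : DifferentiableAt ℝ (pdy v) p₀ := by
    rw [hvyev.differentiableAt_iff]
    exact (hasFDerivAt_div'
      (((huy p₀ hp₀V).hasFDerivAt.mul (hw_pkg p₀ hp₀V).1.hasFDerivAt).sub
        ((hud p₀ hp₀V).hasFDerivAt.mul (hw_pkg p₀ hp₀V).2.2.hasFDerivAt))
      ((hw_pkg p₀ hp₀V).1.hasFDerivAt.mul (hw_pkg p₀ hp₀V).1.hasFDerivAt) hDni).differentiableAt
  have hGxdiff : DifferentiableAt ℝ (pdx G) p₀ := by
    rw [hGxev.differentiableAt_iff]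
    exact hvxdiff.add (((diff_ef α p₀).const_mul α).const_mul ε)
  have hGydiff : DifferentiableAt ℝ (pdy G) p₀ := by
    rw [hGyev.differentiableAt_iff]
    exact hvydiff
  -- gradient of G vanishes at p₀
  have hGx0 : pdx G p₀ = 0 := by
    have hd := hasDerivAt_sliceX (hGdiff p₀ hp₀V)
    have hm := isLocalMax_sliceX hmax
    have := hm.deriv_eq_zero
    rw [hd.deriv] at this
    exact this
  have hGy0 : pdy G p₀ = 0 := by
    have hd := hasDerivAt_sliceY (hGdiff p₀ hp₀V)
    have hm := isLocalMax_sliceY hmax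
    have := hm.deriv_eq_zero
    rw [hd.deriv] at this
    exact this
  -- second derivative test at p₀
  obtain ⟨δ, hδ, hball⟩ := Metric.isOpen_iff.1 hVo p₀ hp₀V
  have hxIoo : ∀ x ∈ Set.Ioo (p₀.1 - δ) (p₀.1 + δ), (x, p₀.2) ∈ V := by
    intro x hx
    apply hball
    rw [Metric.mem_ball, Prod.dist_eq]
    simp only [Real.dist_eq]
    apply max_lt
    · rw [abs_lt]; constructor <;> [linarith [hx.1]; linarith [hx.2]]
    · simpa using hδ
  have hyIoo : ∀ y ∈ Set.Ioo (p₀.2 - δ) (p₀.2 + δ), (p₀.1, y) ∈ V := by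
    intro y hy
    apply hball
    rw [Metric.mem_ball, Prod.dist_eq]
    simp only [Real.dist_eq]
    apply max_lt
    · simpa using hδ
    · rw [abs_lt]; constructor <;> [linarith [hy.1]; linarith [hy.2]]
  have hxx_le : pdx (pdx G) p₀ ≤ 0 := by
    apply sdt hδ (fun x hx => hasDerivAt_sliceX (hGdiff _ (hxIoo x hx)))
      (hasDerivAt_sliceX hGxdiff) (isLocalMax_sliceX hmax)
  have hyy_le : pdy (pdy G) p₀ ≤ 0 := by
    apply sdt hδ (fun y hy => hasDerivAt_sliceY (hGdiff _ (hyIoo y hy)))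
      (hasDerivAt_sliceY hGydiff) (isLocalMax_sliceY hmax)
  -- express second derivatives of G in terms of v
  have hvx2 : pdx (pdx G) p₀ = pdx (pdx v) p₀ + ε * (α * (α * ef α p₀)) := by
    rw [pdx_congr hGxev,
      pdx_add hvxdiff (((diff_ef α p₀).const_mul α).const_mul ε),
      pdx_const_mul ε ((diff_ef α p₀).const_mul α), pdx_const_mul α (diff_ef α p₀), pdx_ef]
  have hvy2 : pdy (pdy G) p₀ = pdy (pdy v) p₀ := by
    rw [pdy_congr hGyev]
  -- gradient values for v
  have hvx0 : pdx v p₀ = -(ε * (α * ef α p₀)) := by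
    have := hGxev.self_of_nhds
    simp only at this
    rw [this] at hGx0
    linarith
  have hvy0 : pdy v p₀ = 0 := by
    have := hGyev.self_of_nhds
    simp only at this
    rw [this] at hGy0
    exact hGy0
  -- final contradiction
  have hkeyp := hkey p₀ hp₀V
  rw [lap] at hkeyp
  have hWpos : 0 < wf p₀ := hwpos p₀ hp₀K
  have hEpos : 0 < ef α p₀ := ef_pos α p₀
  have hCbp := hCb p₀ hp₀K
  rw [abs_le] at hCbp
  have hlaple : pdx (pdx v) p₀ + pdy (pdy v) p₀ ≤ -(ε * (α ^ 2 * ef α p₀)) := by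
    have := hxx_le
    have := hyy_le
    rw [hvx2] at hxx_le
    rw [hvy2] at hyy_le
    nlinarith
  rw [hvx0, hvy0] at hkeyp
  have hprod : 0 < ε * (α * ef α p₀) := mul_pos hε (mul_pos hα hEpos)
  have hT : wf p₀ * (pdx (pdx v) p₀ + pdy (pdy v) p₀) =
      2 * (ε * (α * ef α p₀)) * pdx wf p₀ := by linear_combination hkeyp
  have h1 : wf p₀ * (pdx (pdx v) p₀ + pdy (pdy v) p₀) ≤
      wf p₀ * -(ε * (α ^ 2 * ef α p₀)) := mul_le_mul_of_nonneg_left hlaple hWpos.le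
  have h6 : 2 * (ε * (α * ef α p₀)) * pdx wf p₀ ≤ wf p₀ * -(ε * (α ^ 2 * ef α p₀)) := by
    linarith
  have h4 : (-(C * wf p₀)) * (ε * (α * ef α p₀)) ≤ pdx wf p₀ * (ε * (α * ef α p₀)) :=
    mul_le_mul_of_nonneg_right hCbp.1 hprod.le
  have h5 : 0 < wf p₀ * (ε * (α * ef α p₀)) := mul_pos hWpos hprod
  have h7 : wf p₀ * (ε * (α * ef α p₀)) * α ≤ wf p₀ * (ε * (α * ef α p₀)) * (2 * C) := by
    nlinarith [h4, h6]
  have h8 : α ≤ 2 * C := le_of_mul_le_mul_left (by linarith [h7]) h5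
  rw [hα_def] at h8
  linarith

/-- Uniqueness for the Dirichlet problem of `Δφ + 8φ/(1 + x² + y²)² = 0` on bounded open
sets compactly contained in the unit disk. -/
theorem dirichlet_uniqueness_kappa_one
    (V : Set (ℝ × ℝ)) (hVo : IsOpen V) (hVb : Bornology.IsBounded V)
    (hVD : closure V ⊆ {p : ℝ × ℝ | p.1 ^ 2 + p.2 ^ 2 < 1})
    (φ₁ φ₂ : ℝ × ℝ → ℝ)
    (hc1 : ContinuousOn φ₁ (closure V)) (hc2 : ContinuousOn φ₂ (closure V))
    (hd1 : ∀ p ∈ V, DifferentiableAt ℝ φ₁ p ∧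
      DifferentiableAt ℝ (pdx φ₁) p ∧ DifferentiableAt ℝ (pdy φ₁) p)
    (hd2 : ∀ p ∈ V, DifferentiableAt ℝ φ₂ p ∧
      DifferentiableAt ℝ (pdx φ₂) p ∧ DifferentiableAt ℝ (pdy φ₂) p)
    (hpde1 : ∀ p ∈ V, lap φ₁ p + 8 * φ₁ p / (1 + p.1 ^ 2 + p.2 ^ 2) ^ 2 = 0)
    (hpde2 : ∀ p ∈ V, lap φ₂ p + 8 * φ₂ p / (1 + p.1 ^ 2 + p.2 ^ 2) ^ 2 = 0)
    (hbd : ∀ p ∈ frontier V, φ₁ p = φ₂ p) :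
    ∀ p ∈ closure V, φ₁ p = φ₂ p := by
  intro p hp
  have h1 := one_sided V hVo hVb hVD φ₁ φ₂ hc1 hc2 hd1 hd2 hpde1 hpde2 hbd p hp
  have h2 := one_sided V hVo hVb hVD φ₂ φ₁ hc2 hc1 hd2 hd1 hpde2 hpde1
    (fun r hr => (hbd r hr).symm) p hp
  linarith
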